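/- arXiv:1109.0141 — 3 statements merged into one kernel-verified Lean document; each statement's English description precedes it below -/
import Mathlib

section
/- Let p_1 ≥ p_2 ≥ ... ≥ p_n ≥ 0 with ∑ p_i = 1, and let X_1,...,X_n be i.i.d. with CDF F. Then for all x ∈ ℝ, ∑_{i=1}^n p_i F_{n-i+1:n}(x) ≤ F(x) ≤ ∑_{i=1}^n p_i F_{i:n}(x). -/
open MeasureTheory ProbabilityTheory Finset
open scoped ENNReal

/-- The `i`-th order statistic (0-indexed) of the values `X 0 ω, ..., X (n-1) ω`. -/
noncomputable def orderStat {Ω : Type*} {n : ℕ} (X : Fin n → Ω → ℝ) (i : Fin n) (ω : Ω) : ℝ :=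
  X (Tuple.sort (fun j => X j ω) i) ω

private theorem sum_ite_range_aux (s : ℕ) : ∀ n : ℕ, s ≤ n →
    ∑ i ∈ range n, (if i + 1 ≤ s then (1:ℝ≥0∞) else 0) = s := by
  intro n
  induction n with
  | zero => intro h; simp [Nat.le_zero.mp h]
  | succ n ih =>
    intro h
    rw [Finset.sum_range_succ]
    rcases Nat.lt_or_ge s (n+1) with hs | hs
    · have : ¬ (n + 1 ≤ s) := by omega
      rw [if_neg this, ih (by omega), add_zero]
    · have hs' : s = n + 1 := le_antisymm h hs
      subst hs'
      rw [if_pos le_rfl]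
      have : ∀ i ∈ range n, (if i + 1 ≤ n + 1 then (1:ℝ≥0∞) else 0) = 1 := by
        intro i hi; rw [if_pos (by simp at hi; omega)]
      rw [Finset.sum_congr rfl this, Finset.sum_const, card_range]
      simp [add_comm]

private theorem orderStat_le_iff_aux {Ω : Type*} {n : ℕ} (X : Fin n → Ω → ℝ) (i : Fin n)
    (ω : Ω) (x : ℝ) :
    (orderStat X i ω ≤ x) ↔
      (i : ℕ) + 1 ≤ #(univ.filter fun j => X j ω ≤ x) := by
  set f : Fin n → ℝ := fun j => X j ω with hf
  set σ := Tuple.sort f with hσ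
  have hmono : Monotone (f ∘ σ) := Tuple.monotone_sort f
  have hcard : #(univ.filter fun j => f (σ j) ≤ x) = #(univ.filter fun j => f j ≤ x) := by
    apply Finset.card_bij (fun j _ => σ j)
    · intro j hj; simp only [mem_filter, mem_univ, true_and] at hj ⊢; exact hj
    · intro a _ b _ hab; exact σ.injective hab
    · intro b hb; refine ⟨σ.symm b, ?_, by simp⟩
      simp only [mem_filter, mem_univ, true_and] at hb ⊢; simpa using hb
  rw [← hcard]
  show f (σ i) ≤ x ↔ _
  constructor
  · intro h
    have hsub : Finset.Iic i ⊆ univ.filter fun j => f (σ j) ≤ x := by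
      intro j hj
      simp only [mem_filter, mem_univ, true_and]
      exact le_trans (hmono (Finset.mem_Iic.mp hj)) h
    calc (i:ℕ) + 1 = #(Finset.Iic i) := (Fin.card_Iic i).symm
    _ ≤ _ := Finset.card_le_card hsub
  · intro h
    by_contra hx
    have hsub : (univ.filter fun j => f (σ j) ≤ x) ⊆ Finset.Iio i := by
      intro j hj
      simp only [mem_filter, mem_univ, true_and] at hj
      rw [Finset.mem_Iio]
      by_contra hji
      exact hx (le_trans (hmono (not_lt.mp hji)) hj)
    have := Finset.card_le_card hsub
    rw [Fin.card_Iio] at this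
    omega

/-- Lemma 1: for a decreasing probability vector `p`,
`∑ pᵢ F_{n-i+1:n}(x) ≤ F(x) ≤ ∑ pᵢ F_{i:n}(x)`. -/
theorem orderStat_mixture_bounds {Ω : Type*} [MeasurableSpace Ω]
    (μ : Measure Ω) [IsProbabilityMeasure μ] (n : ℕ) (hn : 0 < n)
    (X : Fin n → Ω → ℝ) (hmeas : ∀ i, Measurable (X i))
    (hindep : iIndepFun X μ)
    (F : ℝ → ℝ) (hF : ∀ i x, (μ {ω | X i ω ≤ x}).toReal = F x)
    (p : Fin n → ℝ) (hp0 : ∀ i, 0 ≤ p i)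
    (hpdec : ∀ i j : Fin n, i ≤ j → p j ≤ p i)
    (hpsum : ∑ i : Fin n, p i = 1) :
    ∀ x : ℝ,
      (∑ i : Fin n, p i * (μ {ω | orderStat X i.rev ω ≤ x}).toReal) ≤ F x ∧
      F x ≤ ∑ i : Fin n, p i * (μ {ω | orderStat X i ω ≤ x}).toReal := by
  intro x
  set S : Ω → ℕ := fun ω => #(univ.filter fun j => X j ω ≤ x) with hSdef
  have hSle : ∀ ω, S ω ≤ n := by
    intro ω
    calc S ω ≤ #(univ : Finset (Fin n)) := Finset.card_le_card (Finset.filter_subset _ _)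
    _ = n := by simp
  have hset : ∀ i : Fin n, {ω | orderStat X i ω ≤ x} = {ω | (i:ℕ)+1 ≤ S ω} := by
    intro i; ext ω; exact orderStat_le_iff_aux X i ω x
  have hmeasS : Measurable S := by
    have hSeq : S = fun ω => ∑ j : Fin n, if X j ω ≤ x then 1 else 0 :=
      funext fun ω => Finset.card_filter _ _
    rw [hSeq]
    exact Finset.measurable_sum _ fun j _ =>
      Measurable.ite (measurableSet_le (hmeas j) measurable_const)
        measurable_const measurable_const
  have hmeasA : ∀ i : Fin n, MeasurableSet {ω | (i:ℕ)+1 ≤ S ω} := by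
    intro i
    exact measurableSet_le measurable_const hmeasS
  -- key sum identity
  have key : ∑ i : Fin n, μ {ω | (i:ℕ)+1 ≤ S ω} = ∑ j : Fin n, μ {ω | X j ω ≤ x} := by
    have h1 : ∀ i : Fin n, μ {ω | (i:ℕ)+1 ≤ S ω}
        = ∫⁻ ω, ({ω | (i:ℕ)+1 ≤ S ω}).indicator 1 ω ∂μ :=
      fun i => (lintegral_indicator_one (hmeasA i)).symm
    have h2 : ∀ j : Fin n, μ {ω | X j ω ≤ x}
        = ∫⁻ ω, ({ω | X j ω ≤ x}).indicator 1 ω ∂μ :=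
      fun j => (lintegral_indicator_one (measurableSet_le (hmeas j) measurable_const)).symm
    simp_rw [h1, h2]
    rw [← lintegral_finset_sum (f := fun (i : Fin n) ω => ({ω | (i:ℕ)+1 ≤ S ω}).indicator 1 ω)
        _ (fun i _ => measurable_const.indicator (hmeasA i)),
      ← lintegral_finset_sum (f := fun (j : Fin n) ω => ({ω | X j ω ≤ x}).indicator 1 ω)
        _ (fun j _ => measurable_const.indicator (measurableSet_le (hmeas j) measurable_const))]
    apply lintegral_congr
    intro ω
    have hL : ∑ i : Fin n, ({ω | (i:ℕ)+1 ≤ S ω}).indicator (1 : Ω → ℝ≥0∞) ω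
        = (S ω : ℝ≥0∞) := by
      have heq : ∀ i : Fin n, ({ω | (i:ℕ)+1 ≤ S ω}).indicator (1 : Ω → ℝ≥0∞) ω
          = if (i:ℕ) + 1 ≤ S ω then 1 else 0 := by
        intro i; by_cases h : (i:ℕ)+1 ≤ S ω <;> simp [Set.indicator_apply, h] <;> omega
      rw [Finset.sum_congr rfl fun i _ => heq i,
        Fin.sum_univ_eq_sum_range (fun k => if k + 1 ≤ S ω then (1:ℝ≥0∞) else 0)]
      exact sum_ite_range_aux (S ω) n (hSle ω)
    have hR : ∑ j : Fin n, ({ω | X j ω ≤ x}).indicator (1 : Ω → ℝ≥0∞) ω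
        = (S ω : ℝ≥0∞) := by
      have heq : ∀ j : Fin n, ({ω | X j ω ≤ x}).indicator (1 : Ω → ℝ≥0∞) ω
          = if X j ω ≤ x then 1 else 0 := by
        intro j; by_cases h : X j ω ≤ x <;> simp [Set.indicator_apply, h]
      rw [Finset.sum_congr rfl fun j _ => heq j,
        show (S ω) = ∑ j : Fin n, if X j ω ≤ x then 1 else 0 from Finset.card_filter _ _,
        Nat.cast_sum]
      exact Finset.sum_congr rfl fun j _ => by by_cases h : X j ω ≤ x <;> simp [h]
    rw [hL, hR]
  -- real-valued versions
  set a : Fin n → ℝ := fun i => (μ {ω | orderStat X i ω ≤ x}).toReal with hadef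
  have hane : ∀ i : Fin n, μ {ω | orderStat X i ω ≤ x} ≠ ⊤ := fun i => measure_ne_top μ _
  have hasum : ∑ i : Fin n, a i = n * F x := by
    rw [hadef]
    simp only
    rw [← ENNReal.toReal_sum (fun i _ => hane i)]
    simp_rw [hset]
    rw [key, ENNReal.toReal_sum (fun j _ => measure_ne_top μ _),
      Finset.sum_congr rfl fun j _ => hF j x, Finset.sum_const, Finset.card_univ,
      Fintype.card_fin, nsmul_eq_mul]
  have hamono : ∀ i j : Fin n, i ≤ j → a j ≤ a i := by
    intro i j hij
    apply ENNReal.toReal_mono (hane i)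
    rw [hset i, hset j]
    apply measure_mono
    intro ω hω
    simp only [Set.mem_setOf_eq] at hω ⊢
    have : (i:ℕ) ≤ (j:ℕ) := hij
    omega
  constructor
  · -- lower bound
    have hb : ∀ i : Fin n, (μ {ω | orderStat X i.rev ω ≤ x}).toReal = a i.rev := fun i => rfl
    simp_rw [hb]
    have hanti : Antivary p (fun i : Fin n => a i.rev) := by
      intro i j hij
      rcases le_total i j with h | h
      · exact hpdec i j h
      · exfalso
        have h2 : i.rev ≤ j.rev := Fin.rev_le_rev.mpr h
        exact absurd (hamono i.rev j.rev h2) (not_le.mpr hij)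
    have hcheb := hanti.card_mul_sum_le_sum_mul_sum
    rw [Fintype.card_fin, hpsum, one_mul] at hcheb
    have hrevsum : ∑ i : Fin n, a i.rev = ∑ i : Fin n, a i :=
      Fintype.sum_bijective Fin.rev Fin.rev_bijective _ _ (fun i => rfl)
    rw [hrevsum, hasum] at hcheb
    have hn' : (0:ℝ) < n := by exact_mod_cast hn
    nlinarith [hcheb]
  · -- upper bound
    have hmono : Monovary p a := by
      intro i j hij
      rcases le_total j i with h | h
      · exact hpdec j i h
      · exfalso
        exact absurd (hamono i j h) (not_le.mpr hij)
    have hcheb := hmono.sum_mul_sum_le_card_mul_sum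
    rw [Fintype.card_fin, hpsum, one_mul, hasum] at hcheb
    have hn' : (0:ℝ) < n := by exact_mod_cast hn
    nlinarith [hcheb]
end

section
/- Let p and q be decreasing probability vectors in ℝ^n with p majorized by q. Then for all x ∈ ℝ: ∑ q_i F_{n-i+1:n}(x) ≤ ∑ p_i F_{n-i+1:n}(x) ≤ F(x) ≤ ∑ p_i F_{i:n}(x) ≤ ∑ q_i F_{i:n}(x). -/
open MeasureTheory ProbabilityTheory Finset
open scoped ENNReal NNReal

/-- For a monotone tuple, `g i ≤ x` iff `i` is below the count of values `≤ x`. -/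
lemma monotone_le_iff_lt_card {n : ℕ} {g : Fin n → ℝ} (hg : Monotone g) (x : ℝ) (i : Fin n) :
    g i ≤ x ↔ (i : ℕ) < #(univ.filter fun j => g j ≤ x) := by
  constructor
  · intro h
    have hsub : Finset.Iic i ⊆ univ.filter fun j => g j ≤ x := by
      intro j hj
      simp only [Finset.mem_Iic] at hj
      simp only [Finset.mem_filter, Finset.mem_univ, true_and]
      exact le_trans (hg hj) h
    have := Finset.card_le_card hsub
    rw [Fin.card_Iic] at this
    omega
  · intro h
    by_contra hx
    have hsub : (univ.filter fun j => g j ≤ x) ⊆ Finset.Iio i := by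
      intro j hj
      simp only [Finset.mem_filter, Finset.mem_univ, true_and] at hj
      simp only [Finset.mem_Iio]
      by_contra hij
      exact hx (le_trans (hg (not_lt.1 hij)) hj)
    have := Finset.card_le_card hsub
    rw [Fin.card_Iio] at this
    omega

/-- Characterization of the order-statistic event by counting. -/
lemma orderStat_le_iff {Ω : Type*} {n : ℕ} (X : Fin n → Ω → ℝ) (i : Fin n) (ω : Ω) (x : ℝ) :
    orderStat X i ω ≤ x ↔ (i : ℕ) < #(univ.filter fun j => X j ω ≤ x) := by
  set f : Fin n → ℝ := fun j => X j ω with hf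
  set σ := Tuple.sort f with hσ
  have hmono : Monotone (f ∘ σ) := Tuple.monotone_sort f
  have h1 : orderStat X i ω = (f ∘ σ) i := rfl
  rw [h1, monotone_le_iff_lt_card hmono x i]
  have hcard : #(univ.filter fun j => (f ∘ σ) j ≤ x) = #(univ.filter fun j => f j ≤ x) := by
    rw [Finset.card_filter, Finset.card_filter]
    exact Fintype.sum_equiv σ _ _ (fun j => rfl)
  rw [hcard]

lemma measurable_count {Ω : Type*} [MeasurableSpace Ω] {n : ℕ} (X : Fin n → Ω → ℝ)
    (hmeas : ∀ i, Measurable (X i)) (x : ℝ) :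
    Measurable (fun ω => #(univ.filter fun j => X j ω ≤ x)) := by
  have : (fun ω => #(univ.filter fun j => X j ω ≤ x)) =
      fun ω => ∑ j : Fin n, if X j ω ≤ x then 1 else 0 := by
    funext ω; rw [Finset.card_filter]
  rw [this]
  apply Finset.measurable_sum
  intro j _
  exact Measurable.ite ((hmeas j) measurableSet_Iic) measurable_const measurable_const

lemma measurableSet_orderStat_le {Ω : Type*} [MeasurableSpace Ω] {n : ℕ} (X : Fin n → Ω → ℝ)
    (hmeas : ∀ i, Measurable (X i)) (i : Fin n) (x : ℝ) :
    MeasurableSet {ω | orderStat X i ω ≤ x} := by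
  have : {ω | orderStat X i ω ≤ x} =
      (fun ω => #(univ.filter fun j => X j ω ≤ x)) ⁻¹' (Set.Ioi (i : ℕ)) := by
    ext ω
    simp [orderStat_le_iff X i ω x, Set.mem_preimage, Set.mem_Ioi]
  rw [this]
  exact measurable_count X hmeas x measurableSet_Ioi

/-- The sum of the order-statistic CDFs equals `n` times the common CDF. -/
lemma sum_measure_orderStat {Ω : Type*} [MeasurableSpace Ω] (μ : Measure Ω)
    [IsProbabilityMeasure μ] {n : ℕ} (X : Fin n → Ω → ℝ) (hmeas : ∀ i, Measurable (X i))
    (x : ℝ) :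
    ∑ i : Fin n, μ {ω | orderStat X i ω ≤ x} = ∑ j : Fin n, μ {ω | X j ω ≤ x} := by
  have hA : ∀ i : Fin n, MeasurableSet {ω | orderStat X i ω ≤ x} :=
    fun i => measurableSet_orderStat_le X hmeas i x
  have hB : ∀ j : Fin n, MeasurableSet {ω | X j ω ≤ x} :=
    fun j => (hmeas j) measurableSet_Iic
  calc ∑ i : Fin n, μ {ω | orderStat X i ω ≤ x}
      = ∑ i : Fin n, ∫⁻ ω, ({ω | orderStat X i ω ≤ x}).indicator 1 ω ∂μ := by
        refine Finset.sum_congr rfl fun i _ => ?_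
        rw [lintegral_indicator_one (hA i)]
    _ = ∫⁻ ω, ∑ i : Fin n, ({ω | orderStat X i ω ≤ x}).indicator 1 ω ∂μ :=
        (lintegral_finset_sum _ (fun i _ => measurable_one.indicator (hA i))).symm
    _ = ∫⁻ ω, ∑ j : Fin n, ({ω | X j ω ≤ x}).indicator 1 ω ∂μ := by
        congr 1
        funext ω
        have : ∀ i : Fin n, ({ω | orderStat X i ω ≤ x}).indicator (1 : Ω → ℝ≥0∞) ω =
            if X (Tuple.sort (fun j => X j ω) i) ω ≤ x then 1 else 0 := by
          intro i
          simp [Set.indicator_apply, orderStat]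
        simp only [this]
        have : ∀ j : Fin n, ({ω | X j ω ≤ x}).indicator (1 : Ω → ℝ≥0∞) ω =
            if X j ω ≤ x then 1 else 0 := by
          intro j
          simp [Set.indicator_apply]
        simp only [this]
        exact Fintype.sum_equiv (Tuple.sort (fun j => X j ω)) _ _ (fun i => rfl)
    _ = ∑ j : Fin n, μ {ω | X j ω ≤ x} := by
        rw [lintegral_finset_sum _ (fun j _ => measurable_one.indicator (hB j))]
        exact Finset.sum_congr rfl fun j _ => lintegral_indicator_one (hB j)

/-- Abel summation positivity. -/
lemma abel_nonneg (n : ℕ) (G d : ℕ → ℝ) (hG : ∀ i, i + 1 < n → G (i + 1) ≤ G i)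
    (hS : ∀ k, k < n → 0 ≤ ∑ i ∈ range k, d i) (hSn : ∑ i ∈ range n, d i = 0) :
    0 ≤ ∑ i ∈ range n, G i * d i := by
  rcases n with _ | m
  · simp
  set S : ℕ → ℝ := fun k => ∑ i ∈ range k, d i with hSdef
  have hd : ∀ i, d i = S (i + 1) - S i := by
    intro i
    simp [hSdef, Finset.sum_range_succ]
  have key : ∑ i ∈ range (m + 1), G i * d i
      = ∑ i ∈ range m, (G i - G (i + 1)) * S (i + 1) := by
    have h1 : ∑ i ∈ range (m + 1), G i * d i
        = ∑ i ∈ range (m + 1), (G i * S (i + 1) - G i * S i) := by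
      refine Finset.sum_congr rfl fun i _ => ?_
      rw [hd i, mul_sub]
    rw [h1, Finset.sum_sub_distrib]
    have h2 : ∑ i ∈ range (m + 1), G i * S (i + 1)
        = ∑ i ∈ range m, G i * S (i + 1) + G m * S (m + 1) := Finset.sum_range_succ _ m
    have h3 : ∑ i ∈ range (m + 1), G i * S i
        = ∑ i ∈ range m, G (i + 1) * S (i + 1) + G 0 * S 0 := Finset.sum_range_succ' _ m
    have hS0 : S 0 = 0 := by simp [hSdef]
    have hSm : S (m + 1) = 0 := hSn
    rw [h2, h3, hS0, hSm, mul_zero, mul_zero, add_zero, add_zero, ← Finset.sum_sub_distrib]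
    refine Finset.sum_congr rfl fun i _ => by ring
  rw [key]
  apply Finset.sum_nonneg
  intro i hi
  rw [Finset.mem_range] at hi
  have h1 : 0 ≤ S (i + 1) := hS (i + 1) (by omega)
  have h2 : G (i + 1) ≤ G i := hG i (by omega)
  exact mul_nonneg (by linarith) h1

lemma sum_range_dite {n k : ℕ} (hk : k ≤ n) (f : Fin n → ℝ) :
    ∑ i ∈ range k, (if h : i < n then f ⟨i, h⟩ else 0)
      = ∑ i ∈ univ.filter (fun i : Fin n => (i : ℕ) < k), f i := by
  rw [Finset.sum_filter]
  have h1 : ∑ i : Fin n, (if (i : ℕ) < k then f i else 0)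
      = ∑ j ∈ range n, (if h : j < n then (if j < k then f ⟨j, h⟩ else 0) else 0) := by
    rw [← Fin.sum_univ_eq_sum_range (fun j => if h : j < n then (if j < k then f ⟨j, h⟩ else 0) else 0) n]
    refine Finset.sum_congr rfl fun i _ => ?_
    simp [i.isLt]
  rw [h1]
  have h2 : ∑ j ∈ range n, (if h : j < n then (if j < k then f ⟨j, h⟩ else 0) else 0)
      = ∑ j ∈ range k, (if h : j < n then (if j < k then f ⟨j, h⟩ else 0) else 0) := by
    symm
    apply Finset.sum_subset (Finset.range_subset_range.2 hk)
    intro j _ hj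
    rw [Finset.mem_range] at hj
    simp [hj]
  rw [h2]
  refine Finset.sum_congr rfl fun j hj => ?_
  rw [Finset.mem_range] at hj
  simp [hj, lt_of_lt_of_le hj hk]

/-- Majorization comparison: for decreasing vectors `p ≺ q` and antitone nonneg-weights `G`,
`∑ p G ≤ ∑ q G`. -/
lemma maj_sum_le {n : ℕ} (p q : Fin n → ℝ)
    (hpsum : ∑ i : Fin n, p i = 1) (hqsum : ∑ i : Fin n, q i = 1)
    (hmaj : ∀ k : ℕ, k < n →
      ∑ i ∈ univ.filter (fun i : Fin n => (i : ℕ) < k), p i ≤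
      ∑ i ∈ univ.filter (fun i : Fin n => (i : ℕ) < k), q i)
    (G : Fin n → ℝ) (hGanti : ∀ i j : Fin n, i ≤ j → G j ≤ G i) :
    ∑ i : Fin n, p i * G i ≤ ∑ i : Fin n, q i * G i := by
  set G' : ℕ → ℝ := fun k => if h : k < n then G ⟨k, h⟩ else 0 with hG'
  set d' : ℕ → ℝ := fun k => if h : k < n then q ⟨k, h⟩ - p ⟨k, h⟩ else 0 with hd'
  have hsplit : ∀ k, k ≤ n → ∑ i ∈ range k, d' i
      = ∑ i ∈ univ.filter (fun i : Fin n => (i : ℕ) < k), q i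
        - ∑ i ∈ univ.filter (fun i : Fin n => (i : ℕ) < k), p i := by
    intro k hk
    rw [← Finset.sum_sub_distrib, ← sum_range_dite hk (fun i => q i - p i)]
  have habel := abel_nonneg n G' d' ?_ ?_ ?_
  · have hfin : ∑ i ∈ range n, G' i * d' i = ∑ i : Fin n, G i * (q i - p i) := by
      rw [← Fin.sum_univ_eq_sum_range (fun j => G' j * d' j) n]
      refine Finset.sum_congr rfl fun i _ => ?_
      simp [hG', hd', i.isLt]
    rw [hfin] at habel
    have hexp : ∑ i : Fin n, G i * (q i - p i)
        = ∑ i : Fin n, q i * G i - ∑ i : Fin n, p i * G i := by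
      rw [← Finset.sum_sub_distrib]
      refine Finset.sum_congr rfl fun i _ => by ring
    rw [hexp] at habel
    linarith
  · intro i hi
    simp only [hG']
    rw [dif_pos (by omega : i < n), dif_pos (by omega : i + 1 < n)]
    exact hGanti ⟨i, by omega⟩ ⟨i + 1, by omega⟩ (by simp [Fin.mk_le_mk])
  · intro k hk
    rw [hsplit k (le_of_lt hk)]
    linarith [hmaj k hk]
  · rw [hsplit n le_rfl]
    have h1 : (univ.filter (fun i : Fin n => (i : ℕ) < n)) = univ := by
      apply Finset.filter_true_of_mem
      intro i _
      exact i.isLt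
    rw [h1, hpsum, hqsum]
    ring

/-- Corollary: if `p ≺ q` are decreasing probability vectors, then the `q`-mixture
bounds are wider than the `p`-mixture bounds around `F`. -/
theorem orderStat_mixture_bounds_of_majorized {Ω : Type*} [MeasurableSpace Ω]
    (μ : Measure Ω) [IsProbabilityMeasure μ] (n : ℕ) (hn : 0 < n)
    (X : Fin n → Ω → ℝ) (hmeas : ∀ i, Measurable (X i))
    (hindep : iIndepFun X μ)
    (F : ℝ → ℝ) (hF : ∀ i x, (μ {ω | X i ω ≤ x}).toReal = F x)
    (p q : Fin n → ℝ) (hp0 : ∀ i, 0 ≤ p i) (hq0 : ∀ i, 0 ≤ q i)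
    (hpdec : ∀ i j : Fin n, i ≤ j → p j ≤ p i)
    (hqdec : ∀ i j : Fin n, i ≤ j → q j ≤ q i)
    (hpsum : ∑ i : Fin n, p i = 1) (hqsum : ∑ i : Fin n, q i = 1)
    (hmaj : ∀ k : ℕ, k < n →
      ∑ i ∈ univ.filter (fun i : Fin n => (i : ℕ) < k), p i ≤
      ∑ i ∈ univ.filter (fun i : Fin n => (i : ℕ) < k), q i) :
    ∀ x : ℝ,
      (∑ i : Fin n, q i * (μ {ω | orderStat X i.rev ω ≤ x}).toReal) ≤
        (∑ i : Fin n, p i * (μ {ω | orderStat X i.rev ω ≤ x}).toReal) ∧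
      (∑ i : Fin n, p i * (μ {ω | orderStat X i.rev ω ≤ x}).toReal) ≤ F x ∧
      F x ≤ (∑ i : Fin n, p i * (μ {ω | orderStat X i ω ≤ x}).toReal) ∧
      (∑ i : Fin n, p i * (μ {ω | orderStat X i ω ≤ x}).toReal) ≤
        ∑ i : Fin n, q i * (μ {ω | orderStat X i ω ≤ x}).toReal := by
  intro x
  set G : Fin n → ℝ := fun i => (μ {ω | orderStat X i ω ≤ x}).toReal with hG
  -- G is antitone
  have hGanti : ∀ i j : Fin n, i ≤ j → G j ≤ G i := by
    intro i j hij
    have hsub : {ω | orderStat X j ω ≤ x} ⊆ {ω | orderStat X i ω ≤ x} := by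
      intro ω hω
      have hmono := Tuple.monotone_sort (fun j => X j ω)
      exact le_trans (hmono hij) hω
    exact ENNReal.toReal_mono (measure_ne_top μ _) (measure_mono hsub)
  -- sum of G equals n * F x
  have hGsum : ∑ i : Fin n, G i = n * F x := by
    have h1 : ∑ i : Fin n, G i = (∑ i : Fin n, μ {ω | orderStat X i ω ≤ x}).toReal := by
      rw [ENNReal.toReal_sum (fun i _ => measure_ne_top μ _)]
    rw [h1, sum_measure_orderStat μ X hmeas x,
      ENNReal.toReal_sum (fun i _ => measure_ne_top μ _)]
    simp only [hF]
    rw [Finset.sum_const, Finset.card_univ, Fintype.card_fin, nsmul_eq_mul]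
  have hHrev : ∀ i : Fin n, (μ {ω | orderStat X i.rev ω ≤ x}).toReal = G i.rev := fun i => rfl
  have hHsum : ∑ i : Fin n, G i.rev = n * F x := by
    rw [← hGsum]
    exact Fintype.sum_equiv Fin.revPerm _ _ (fun i => rfl)
  have hHmono : ∀ i j : Fin n, i ≤ j → G i.rev ≤ G j.rev := by
    intro i j hij
    exact hGanti j.rev i.rev (Fin.rev_le_rev.2 hij)
  have hncast : (0 : ℝ) < (n : ℝ) := by exact_mod_cast hn
  refine ⟨?_, ?_, ?_, ?_⟩
  · -- ∑ q H ≤ ∑ p H, via majorization with -H antitone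
    simp only [hHrev]
    have := maj_sum_le p q hpsum hqsum hmaj (fun i => -(G i.rev)) ?_
    · simp only [mul_neg, Finset.sum_neg_distrib] at this
      linarith
    · intro i j hij
      simp only [neg_le_neg_iff]
      exact hHmono i j hij
  · -- ∑ p H ≤ F x, Chebyshev with antivarying p, H
    simp only [hHrev]
    have hanti : Antivary p (fun i => G i.rev) := by
      intro i j hlt
      rcases le_or_gt i j with h | h
      · exact hpdec i j h
      · exact absurd hlt (not_lt.2 (hHmono j i h.le))
    have hcheb := hanti.card_mul_sum_le_sum_mul_sum
    rw [Fintype.card_fin, hpsum, one_mul, hHsum] at hcheb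
    exact le_of_mul_le_mul_left hcheb hncast
  · -- F x ≤ ∑ p G, Chebyshev with monovarying p, G
    have hmono : Monovary p G := by
      intro i j hlt
      rcases le_or_gt j i with h | h
      · exact hpdec j i h
      · exfalso
        exact absurd (hGanti i j (le_of_lt h)) (not_le.2 hlt)
    have hcheb := hmono.sum_mul_sum_le_card_mul_sum
    rw [Fintype.card_fin, hpsum, one_mul, hGsum] at hcheb
    exact le_of_mul_le_mul_left hcheb hncast
  · exact maj_sum_le p q hpsum hqsum hmaj G hGanti
end

section
/- Under the hypotheses of the preceding bound (c_n finite), for every α ∈ (0,1), m^{1−α} · ∫_ℝ |K_n^{(m)}(x) − H_n^{(m)}(x)| dx → 0 as m → ∞; i.e., the L¹ distance between the upper and lower bounds is o(1/m^{1−α}). -/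
open MeasureTheory ProbabilityTheory Finset Filter

/-- The weight `p_{i+1}(m) = (m + n − (i+1) + 1)/(nm + n(n+1)/2)` for `i : Fin n` (0-indexed). -/
noncomputable def weight (n : ℕ) (m : ℕ) (i : Fin n) : ℝ :=
  ((m : ℝ) + n - (i : ℕ)) / (n * m + n * (n + 1) / 2)

lemma weight_sub_le (n m : ℕ) (hn : 0 < n) (hm : 1 ≤ m) (i : Fin n) :
    |weight n m i - 1 / n| ≤ 1 / m := by
  have hN1 : (1 : ℝ) ≤ n := by exact_mod_cast hn
  have hM1 : (1 : ℝ) ≤ m := by exact_mod_cast hm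
  have hI0 : (0 : ℝ) ≤ (i : ℕ) := Nat.cast_nonneg _
  have hI : ((i : ℕ) : ℝ) ≤ (n : ℝ) - 1 := by
    have h := i.isLt
    have : ((i : ℕ) : ℝ) + 1 ≤ n := by exact_mod_cast h
    linarith
  have hD : (0 : ℝ) < (n : ℝ) * m + n * (n + 1) / 2 := by nlinarith
  have hkey : weight n m i - 1 / n =
      ((n : ℝ) - (i : ℕ) - (n + 1) / 2) / ((n : ℝ) * m + n * (n + 1) / 2) := by
    unfold weight
    field_simp
    ring
  rw [hkey, abs_div, abs_of_pos hD, div_le_div_iff₀ hD (by linarith : (0:ℝ) < m)]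
  have hnum : |(n : ℝ) - (i : ℕ) - (n + 1) / 2| ≤ (n : ℝ) :=
    abs_le.mpr ⟨by linarith, by linarith⟩
  nlinarith [abs_nonneg ((n : ℝ) - (i : ℕ) - (n + 1) / 2)]

/-- Theorem 1, (5): the L¹ distance between the bounds is `o(1/m^{1−α})` for every
`α ∈ (0,1)`. -/
theorem orderStat_mixture_L1_little_o {Ω : Type*} [MeasurableSpace Ω]
    (μ : Measure Ω) [IsProbabilityMeasure μ] (n : ℕ) (hn : 0 < n)
    (X : Fin n → Ω → ℝ) (hmeas : ∀ i, Measurable (X i))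
    (hindep : iIndepFun X μ)
    (F : ℝ → ℝ) (hF : ∀ i x, (μ {ω | X i ω ≤ x}).toReal = F x)
    (hint : ∀ i : Fin n, Integrable (fun x : ℝ =>
      |(μ {ω | orderStat X i ω ≤ x}).toReal - (μ {ω | orderStat X i.rev ω ≤ x}).toReal|)) :
    ∀ α : ℝ, 0 < α → α < 1 →
      Tendsto (fun m : ℕ => (m : ℝ) ^ ((1 : ℝ) - α) *
        ∫ x : ℝ, |(∑ i : Fin n, weight n m i * (μ {ω | orderStat X i ω ≤ x}).toReal) -
          ∑ i : Fin n, weight n m i * (μ {ω | orderStat X i.rev ω ≤ x}).toReal|)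
        atTop (nhds 0) := by
  intro α hα0 hα1
  set G : Fin n → ℝ → ℝ := fun i x => (μ {ω | orderStat X i ω ≤ x}).toReal with hG
  set c : ℝ := ∑ i : Fin n, ∫ x : ℝ, |G i x - G i.rev x| with hc
  have hc0 : 0 ≤ c :=
    Finset.sum_nonneg fun i _ => integral_nonneg fun x => abs_nonneg _
  -- pointwise bound for m ≥ 1
  have hpt : ∀ m : ℕ, 1 ≤ m → ∀ x : ℝ,
      |(∑ i : Fin n, weight n m i * G i x) - ∑ i : Fin n, weight n m i * G i.rev x| ≤
        ∑ i : Fin n, (1 / (m : ℝ)) * |G i x - G i.rev x| := by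
    intro m hm x
    have hsum0 : ∑ i : Fin n, (G i x - G i.rev x) = 0 := by
      have hrev : ∑ i : Fin n, G i.rev x = ∑ i : Fin n, G i x :=
        Fintype.sum_bijective Fin.rev Fin.rev_bijective _ _ (fun i => rfl)
      rw [Finset.sum_sub_distrib, hrev, sub_self]
    have key : (∑ i : Fin n, weight n m i * G i x) - ∑ i : Fin n, weight n m i * G i.rev x
        = ∑ i : Fin n, (weight n m i - 1 / n) * (G i x - G i.rev x) := by
      have : ∑ i : Fin n, (weight n m i - 1 / n) * (G i x - G i.rev x)
          = (∑ i : Fin n, (weight n m i * G i x - weight n m i * G i.rev x))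
            - (1 / (n : ℝ)) * ∑ i : Fin n, (G i x - G i.rev x) := by
        rw [Finset.mul_sum, ← Finset.sum_sub_distrib]
        exact Finset.sum_congr rfl fun i _ => by ring
      rw [this, hsum0, Finset.sum_sub_distrib]
      ring
    rw [key]
    calc |∑ i : Fin n, (weight n m i - 1 / n) * (G i x - G i.rev x)|
        ≤ ∑ i : Fin n, |(weight n m i - 1 / n) * (G i x - G i.rev x)| :=
          Finset.abs_sum_le_sum_abs _ _
      _ ≤ ∑ i : Fin n, (1 / (m : ℝ)) * |G i x - G i.rev x| := by
          refine Finset.sum_le_sum fun i _ => ?_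
          rw [abs_mul]
          exact mul_le_mul_of_nonneg_right (weight_sub_le n m hn hm i) (abs_nonneg _)
  -- integral bound
  have hIb : ∀ m : ℕ, 1 ≤ m →
      (∫ x : ℝ, |(∑ i : Fin n, weight n m i * G i x) -
          ∑ i : Fin n, weight n m i * G i.rev x|) ≤ 1 / (m : ℝ) * c := by
    intro m hm
    have hint' : Integrable (fun x : ℝ => ∑ i : Fin n, (1 / (m : ℝ)) * |G i x - G i.rev x|) :=
      integrable_finset_sum _ fun i _ => (hint i).const_mul _
    have h1 := integral_mono_of_nonneg (ae_of_all _ fun x => abs_nonneg _) hint'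
      (ae_of_all _ (hpt m hm))
    have h2 : (∫ x : ℝ, ∑ i : Fin n, (1 / (m : ℝ)) * |G i x - G i.rev x|) = 1 / (m : ℝ) * c := by
      rw [integral_finset_sum _ fun i _ => (hint i).const_mul _, hc, Finset.mul_sum]
      exact Finset.sum_congr rfl fun i _ => integral_const_mul _ _
    calc (∫ x : ℝ, |(∑ i : Fin n, weight n m i * G i x) -
          ∑ i : Fin n, weight n m i * G i.rev x|)
        ≤ ∫ x : ℝ, ∑ i : Fin n, (1 / (m : ℝ)) * |G i x - G i.rev x| := h1
      _ = 1 / (m : ℝ) * c := h2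
  -- squeeze
  have hlim : Tendsto (fun m : ℕ => c * (m : ℝ) ^ (-α)) atTop (nhds 0) := by
    have h := (tendsto_rpow_neg_atTop hα0).comp tendsto_natCast_atTop_atTop
    simpa using h.const_mul c
  refine squeeze_zero' ?_ ?_ hlim
  · filter_upwards with m
    exact mul_nonneg (Real.rpow_nonneg (Nat.cast_nonneg m) _)
      (integral_nonneg fun x => abs_nonneg _)
  · filter_upwards [eventually_ge_atTop 1] with m hm
    have hMpos : (0 : ℝ) < m := by exact_mod_cast hm
    have heq : (m : ℝ) ^ ((1 : ℝ) - α) * (1 / (m : ℝ) * c) = c * (m : ℝ) ^ (-α) := by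
      rw [show (-α : ℝ) = (1 - α) + (-1) by ring, Real.rpow_add hMpos,
        Real.rpow_neg_one, one_div]
      ring
    calc (m : ℝ) ^ ((1 : ℝ) - α) *
          ∫ x : ℝ, |(∑ i : Fin n, weight n m i * G i x) -
            ∑ i : Fin n, weight n m i * G i.rev x|
        ≤ (m : ℝ) ^ ((1 : ℝ) - α) * (1 / (m : ℝ) * c) :=
          mul_le_mul_of_nonneg_left (hIb m hm) (Real.rpow_nonneg (Nat.cast_nonneg m) _)
      _ = c * (m : ℝ) ^ (-α) := heq
end
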